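/- The function Λ(H) = (1/π)·arccos(-ρ(H)), where ρ(H) = (-3^{2H} + 2^{2H+2} - 7)/(8 - 2^{2H+1}), is continuous and strictly monotone increasing on (0,1). -/

import Mathlib

open Real Set

noncomputable def rhoH (H : ℝ) : ℝ :=
  (-(3:ℝ)^(2*H) + 4*(4:ℝ)^H - 7) / (8 - 2*(4:ℝ)^H)

noncomputable def LambdaH (H : ℝ) : ℝ := Real.arccos (-(rhoH H)) / Real.pi

private lemma log4_pos : (0:ℝ) < Real.log 4 := Real.log_pos (by norm_num)
private lemma log9_pos : (0:ℝ) < Real.log 9 := Real.log_pos (by norm_num)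
private lemma log4_lt_log9 : Real.log 4 < Real.log 9 := Real.log_lt_log (by norm_num) (by norm_num)
private lemma log9_eq : Real.log 9 = 2 * Real.log 3 := by
  rw [show (9:ℝ) = 3^(2:ℕ) by norm_num, Real.log_pow]; push_cast; ring

private lemma rpow9 (H : ℝ) : (3:ℝ)^(2*H) = (9:ℝ)^H := by
  rw [Real.rpow_mul (by norm_num : (0:ℝ) ≤ 3)]
  norm_num

private lemma b_pos (H : ℝ) : (0:ℝ) < (4:ℝ)^H := Real.rpow_pos_of_pos (by norm_num) H
private lemma a_pos (H : ℝ) : (0:ℝ) < (9:ℝ)^H := Real.rpow_pos_of_pos (by norm_num) H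

private lemma b_lt {H : ℝ} (h : H < 1) : (4:ℝ)^H < 4 := by
  calc (4:ℝ)^H < 4^(1:ℝ) := Real.rpow_lt_rpow_of_exponent_lt (by norm_num) h
  _ = 4 := Real.rpow_one 4

private lemma a_lt {H : ℝ} (h : H < 1) : (9:ℝ)^H < 9 := by
  calc (9:ℝ)^H < 9^(1:ℝ) := Real.rpow_lt_rpow_of_exponent_lt (by norm_num) h
  _ = 9 := Real.rpow_one 9

private lemma a_gt {H : ℝ} (h : 0 < H) : 1 < (9:ℝ)^H := by
  rw [Real.one_lt_rpow_iff_of_pos (by norm_num)]; exact Or.inl ⟨by norm_num, h⟩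

private lemma h94 : (9:ℝ)^(Real.log 4 / Real.log 9) = 4 := by
  rw [Real.rpow_def_of_pos (by norm_num : (0:ℝ) < 9), mul_comm,
    div_mul_cancel₀ _ (ne_of_gt log9_pos), Real.exp_log (by norm_num)]

private lemma b_eq (H : ℝ) : (4:ℝ)^H = ((9:ℝ)^H) ^ (Real.log 4 / Real.log 9) := by
  rw [← Real.rpow_mul (by norm_num : (0:ℝ) ≤ 9),
    Real.rpow_def_of_pos (by norm_num : (0:ℝ) < 9),
    Real.rpow_def_of_pos (by norm_num : (0:ℝ) < 4)]
  congr 1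
  have h9 : Real.log 9 ≠ 0 := ne_of_gt log9_pos
  field_simp

private lemma c38 : (3:ℝ)/8 < Real.log 4 / Real.log 9 := by
  rw [div_lt_div_iff₀ (by norm_num) log9_pos]
  have h1 : Real.log 729 < Real.log 65536 := Real.log_lt_log (by norm_num) (by norm_num)
  have h2 : Real.log 729 = 3 * Real.log 9 := by
    rw [show (729:ℝ) = 9^(3:ℕ) by norm_num, Real.log_pow]; push_cast; ring
  have h3 : Real.log 65536 = 8 * Real.log 4 := by
    rw [show (65536:ℝ) = 4^(8:ℕ) by norm_num, Real.log_pow]; push_cast; ring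
  linarith

private lemma rho_bounds {H : ℝ} (hH : H ∈ Ioo (0:ℝ) 1) : -1 < rhoH H ∧ rhoH H < 1 := by
  obtain ⟨h0, h1⟩ := hH
  have ha1 : 1 < (9:ℝ)^H := a_gt h0
  have ha9 : (9:ℝ)^H < 9 := a_lt h1
  have hb0 : (0:ℝ) < (4:ℝ)^H := b_pos H
  set c : ℝ := Real.log 4 / Real.log 9 with hc
  have hc0 : 0 < c := div_pos log4_pos log9_pos
  have hc1 : c < 1 := (div_lt_one log9_pos).2 log4_lt_log9
  set a : ℝ := (9:ℝ)^H with haa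
  have hbc : (4:ℝ)^H = a ^ c := b_eq H
  -- chord bound : (5+3a)/8 ≤ a^c
  have chord : (5 + 3*a)/8 ≤ a ^ c := by
    have h := (Real.concaveOn_rpow hc0.le hc1.le).2 (show (1:ℝ) ∈ Ici (0:ℝ) by norm_num)
      (show (9:ℝ) ∈ Ici (0:ℝ) by norm_num) (show (0:ℝ) ≤ (9-a)/8 by linarith)
      (show (0:ℝ) ≤ (a-1)/8 by linarith) (show (9-a)/8 + (a-1)/8 = 1 by ring)
    simp only [smul_eq_mul] at h
    rw [Real.one_rpow, h94] at h
    have e : (9-a)/8 * 1 + (a-1)/8 * 9 = a := by ring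
    rw [e] at h
    linarith
  -- Bernoulli bound : a^c ≤ 4 + (4c/9)*(a-9)
  have bern : a ^ c ≤ 4 * (1 + c * (a/9 - 1)) := by
    have h := rpow_one_add_le_one_add_mul_self (s := a/9 - 1)
      (by nlinarith) hc0.le hc1.le
    have e : (1 + (a/9 - 1)) = a/9 := by ring
    rw [e] at h
    have e2 : (a/9 : ℝ)^c = a^c / 4 := by
      rw [Real.div_rpow (by linarith) (by norm_num), h94]
    rw [e2] at h
    linarith
  have hc38 : (3:ℝ)/8 < c := c38
  have hD : (0:ℝ) < 8 - 2*(4:ℝ)^H := by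
    have := b_lt h1; linarith
  constructor
  · rw [rhoH, rpow9 H, lt_div_iff₀ hD]
    rw [hbc]
    nlinarith [chord]
  · rw [rhoH, rpow9 H, div_lt_iff₀ hD]
    rw [hbc]
    nlinarith [bern, mul_pos (show (0:ℝ) < 9 - a by linarith) (show (0:ℝ) < 8*c/3 - 1 by linarith)]

private lemma slope_exp {y x : ℝ} (hy : 0 < y) (hxy : y < x) :
    (Real.exp y - 1)/y < (Real.exp x - 1)/x := by
  have := strictConvexOn_exp.secant_strict_mono (a := 0) (mem_univ 0) (mem_univ y)
    (mem_univ x) hy.ne' (hy.trans hxy).ne' hxy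
  simpa using this

private lemma key {H : ℝ} (hH : H ∈ Ioo (0:ℝ) 1) :
    Real.log 9 * (9:ℝ)^H * (4 - (4:ℝ)^H) < Real.log 4 * (4:ℝ)^H * (9 - (9:ℝ)^H) := by
  obtain ⟨h0, h1⟩ := hH
  set u : ℝ := 1 - H with hu'
  have hu : 0 < u := by simp only [hu']; linarith
  have hy : 0 < u * Real.log 4 := mul_pos hu log4_pos
  have hxy : u * Real.log 4 < u * Real.log 9 := by
    exact (mul_lt_mul_iff_right₀ hu).2 log4_lt_log9
  have slope := slope_exp hy hxy
  have e4 : Real.exp (u * Real.log 4) = (4:ℝ)^u := by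
    rw [Real.rpow_def_of_pos (by norm_num : (0:ℝ) < 4), mul_comm]
  have e9 : Real.exp (u * Real.log 9) = (9:ℝ)^u := by
    rw [Real.rpow_def_of_pos (by norm_num : (0:ℝ) < 9), mul_comm]
  rw [div_lt_div_iff₀ hy (mul_pos hu log9_pos), e4, e9] at slope
  -- cancel u
  have slope2 : ((4:ℝ)^u - 1) * Real.log 9 < ((9:ℝ)^u - 1) * Real.log 4 := by
    have h : u * (((4:ℝ)^u - 1) * Real.log 9) < u * (((9:ℝ)^u - 1) * Real.log 4) := by
      nlinarith [slope]
    exact (mul_lt_mul_iff_right₀ hu).1 h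
  have f4 : (4:ℝ)^u = 4 / (4:ℝ)^H := by
    rw [hu', Real.rpow_sub (by norm_num), Real.rpow_one]
  have f9 : (9:ℝ)^u = 9 / (9:ℝ)^H := by
    rw [hu', Real.rpow_sub (by norm_num), Real.rpow_one]
  rw [f4, f9] at slope2
  have hb : (0:ℝ) < (4:ℝ)^H := b_pos H
  have ha : (0:ℝ) < (9:ℝ)^H := a_pos H
  have e1 : (4 / (4:ℝ)^H - 1) * Real.log 9 = (4 - (4:ℝ)^H) * Real.log 9 / (4:ℝ)^H := by
    field_simp
  have e2 : (9 / (9:ℝ)^H - 1) * Real.log 4 = (9 - (9:ℝ)^H) * Real.log 4 / (9:ℝ)^H := by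
    field_simp
  rw [e1, e2, div_lt_div_iff₀ hb ha] at slope2
  nlinarith [slope2]

private lemma rho_hasDerivAt {H : ℝ} (h4 : (4:ℝ)^H < 4) :
    HasDerivAt rhoH
      ((2 * (Real.log 4 * (4:ℝ)^H * (9 - (9:ℝ)^H) - Real.log 9 * (9:ℝ)^H * (4 - (4:ℝ)^H)))
        / (8 - 2*(4:ℝ)^H)^2) H := by
  have hD : (8 - 2 * (4:ℝ)^H) ≠ 0 := by have := b_pos H; intro h; nlinarith
  have hd4 : HasDerivAt (fun x : ℝ => (4:ℝ)^x) ((4:ℝ)^H * Real.log 4) H :=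
    (Real.hasStrictDerivAt_const_rpow (by norm_num) H).hasDerivAt
  have h2H : HasDerivAt (fun x : ℝ => 2 * x) 2 H := by
    simpa using (hasDerivAt_id H).const_mul 2
  have hd3 : HasDerivAt (fun x : ℝ => (3:ℝ)^(2*x)) ((3:ℝ)^(2*H) * Real.log 3 * 2) H := by
    have hg : HasDerivAt (fun y : ℝ => (3:ℝ)^y) ((3:ℝ)^(2*H) * Real.log 3) (2*H) :=
      (Real.hasStrictDerivAt_const_rpow (by norm_num) (2*H)).hasDerivAt
    exact hg.comp H h2H
  have hN : HasDerivAt (fun x : ℝ => -(3:ℝ)^(2*x) + 4*(4:ℝ)^x - 7)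
      (-((3:ℝ)^(2*H) * Real.log 3 * 2) + 4*((4:ℝ)^H * Real.log 4)) H :=
    (hd3.neg.add (hd4.const_mul 4)).sub_const 7
  have hDD : HasDerivAt (fun x : ℝ => 8 - 2*(4:ℝ)^x) (0 - 2*((4:ℝ)^H * Real.log 4)) H :=
    (hasDerivAt_const H (8:ℝ)).sub (hd4.const_mul 2)
  have h := hN.div hDD hD
  have e : ((-((3:ℝ)^(2*H) * Real.log 3 * 2) + 4*((4:ℝ)^H * Real.log 4)) * (8 - 2*(4:ℝ)^H)
      - (-(3:ℝ)^(2*H) + 4*(4:ℝ)^H - 7) * (0 - 2*((4:ℝ)^H * Real.log 4))) / (8 - 2*(4:ℝ)^H)^2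
      = (2 * (Real.log 4 * (4:ℝ)^H * (9 - (9:ℝ)^H) - Real.log 9 * (9:ℝ)^H * (4 - (4:ℝ)^H)))
        / (8 - 2*(4:ℝ)^H)^2 := by
    rw [rpow9 H, log9_eq]; ring
  rw [e] at h
  exact h

private lemma rho_strictMono : StrictMonoOn rhoH (Ioo (0:ℝ) 1) := by
  apply strictMonoOn_of_deriv_pos (convex_Ioo 0 1)
  · intro x hx
    exact ((rho_hasDerivAt (b_lt hx.2)).continuousAt).continuousWithinAt
  · rw [interior_Ioo]
    intro x hx
    rw [(rho_hasDerivAt (b_lt hx.2)).deriv]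
    apply div_pos
    · have := key hx
      linarith
    · have := b_lt hx.2
      have : (0:ℝ) < 8 - 2*(4:ℝ)^x := by linarith
      positivity

theorem Lambda_continuous_strictMono :
    ContinuousOn LambdaH (Set.Ioo (0:ℝ) 1) ∧
    StrictMonoOn LambdaH (Set.Ioo (0:ℝ) 1) := by
  have hcont : ContinuousOn rhoH (Ioo (0:ℝ) 1) := fun x hx =>
    ((rho_hasDerivAt (b_lt hx.2)).continuousAt).continuousWithinAt
  constructor
  · exact (Real.continuous_arccos.comp_continuousOn hcont.neg).div_const Real.pi
  · intro x hx y hy hxy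
    obtain ⟨bx1, bx2⟩ := rho_bounds hx
    obtain ⟨by1, by2⟩ := rho_bounds hy
    have hr : rhoH x < rhoH y := rho_strictMono hx hy hxy
    have h1 : -(rhoH y) ∈ Icc (-1:ℝ) 1 := ⟨by linarith, by linarith⟩
    have h2 : -(rhoH x) ∈ Icc (-1:ℝ) 1 := ⟨by linarith, by linarith⟩
    have harc := Real.strictAntiOn_arccos h1 h2 (by linarith)
    unfold LambdaH
    exact (div_lt_div_iff_of_pos_right Real.pi_pos).2 harc
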